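/- Let J be a finite set of jobs with nonnegative processing requirements and let M = {m_1, ..., m_m} (m ≥ 3) be uniform machines with speeds s(m_1) = s(m_2) = 2 and s(m_i) = 2^{i-1} for 3 ≤ i ≤ m. Then the minimum total completion time of scheduling J on M is at least the minimum total completion time of scheduling J on a single machine of speed 2^m. -/

import Mathlib

/-- Optimal total completion time of scheduling jobs `p` on `m` uniform machines
with speeds `speed`: minimum over injective assignments of jobs to
(machine, position-from-end) slots (positions start at 1). -/
noncomputable def optTCTQ (n m : ℕ) (p : Fin n → ℝ) (speed : Fin m → ℝ) : ℝ :=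
  sInf {c : ℝ | ∃ S : Fin n → Fin m × ℕ, Function.Injective S ∧
    (∀ j, 1 ≤ (S j).2) ∧ c = ∑ j, ((S j).2 : ℝ) * p j / speed (S j).1}



def phi (m i k : ℕ) : ℕ :=
  if i = 0 then 2 ^ (m - 1) * (k - 1) + 1
  else 2 ^ (m - i) * (k - 1) + 2 ^ (m - i - 1) + 1

lemma phi_zero (m k : ℕ) : phi m 0 k = 2 ^ (m - 1) * (k - 1) + 1 := if_pos rfl

lemma phi_pos (m i k : ℕ) (h0 : i ≠ 0) (hi : i < m) :
    phi m i k = 2 ^ (m - i - 1) * (2 * (k - 1) + 1) + 1 := by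
  unfold phi
  rw [if_neg h0, show (2:ℕ) ^ (m - i) = 2 ^ (m - i - 1) * 2 by
    rw [← pow_succ]; congr 1; omega]
  ring

lemma two_pow_mul_odd_inj : ∀ e f a b : ℕ, 2 ^ e * (2 * a + 1) = 2 ^ f * (2 * b + 1) → e = f ∧ a = b := by
  intro e
  induction e with
  | zero =>
    intro f a b h
    cases f with
    | zero => simp at h; omega
    | succ f =>
      exfalso
      have h2 : (2 : ℕ) ∣ 2 ^ (f + 1) * (2 * b + 1) :=
        dvd_mul_of_dvd_left (dvd_pow_self 2 (Nat.succ_ne_zero f)) _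
      rw [← h] at h2
      simp at h2
  | succ e ih =>
    intro f a b h
    cases f with
    | zero =>
      exfalso
      have h2 : (2 : ℕ) ∣ 2 ^ (e + 1) * (2 * a + 1) :=
        dvd_mul_of_dvd_left (dvd_pow_self 2 (Nat.succ_ne_zero e)) _
      rw [h] at h2
      simp at h2
    | succ f =>
      have h2 : 2 * (2 ^ e * (2 * a + 1)) = 2 * (2 ^ f * (2 * b + 1)) := by
        rw [show 2 * (2 ^ e * (2 * a + 1)) = 2 ^ (e + 1) * (2 * a + 1) by ring,
            show 2 * (2 ^ f * (2 * b + 1)) = 2 ^ (f + 1) * (2 * b + 1) by ring]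
        exact h
      have := ih f a b (Nat.eq_of_mul_eq_mul_left two_pos h2)
      omega

lemma phi_inj (m : ℕ) (hm : 3 ≤ m) {i i' k k' : ℕ} (hi : i < m) (hi' : i' < m)
    (hk : 1 ≤ k) (hk' : 1 ≤ k') (h : phi m i k = phi m i' k') : i = i' ∧ k = k' := by
  rcases Nat.eq_zero_or_pos i with hi0 | hip <;> rcases Nat.eq_zero_or_pos i' with hi0' | hip'
  · subst hi0; subst hi0'
    rw [phi_zero, phi_zero] at h
    have h2 : 2 ^ (m - 1) * (k - 1) = 2 ^ (m - 1) * (k' - 1) := by omega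
    have := Nat.eq_of_mul_eq_mul_left (Nat.pow_pos two_pos) h2
    omega
  · exfalso
    subst hi0
    rw [phi_zero, phi_pos m i' k' (by omega) hi'] at h
    have hrw : 2 ^ (m - 1) * (k - 1) = 2 ^ (m - i' - 1) * (2 ^ (i' - 1) * 2 * (k - 1)) := by
      rw [show m - 1 = (m - i' - 1) + ((i' - 1) + 1) by omega, pow_add, pow_succ]
      ring
    rw [hrw] at h
    have h2 : 2 ^ (m - i' - 1) * (2 ^ (i' - 1) * 2 * (k - 1)) =
        2 ^ (m - i' - 1) * (2 * (k' - 1) + 1) := by omega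
    have h3 := Nat.eq_of_mul_eq_mul_left (Nat.pow_pos two_pos) h2
    have h4 : 2 ^ (i' - 1) * 2 * (k - 1) = 2 * (2 ^ (i' - 1) * (k - 1)) := by ring
    omega
  · exfalso
    subst hi0'
    rw [phi_zero, phi_pos m i k (by omega) hi] at h
    have hrw : 2 ^ (m - 1) * (k' - 1) = 2 ^ (m - i - 1) * (2 ^ (i - 1) * 2 * (k' - 1)) := by
      rw [show m - 1 = (m - i - 1) + ((i - 1) + 1) by omega, pow_add, pow_succ]
      ring
    rw [hrw] at h
    have h2 : 2 ^ (m - i - 1) * (2 * (k - 1) + 1) =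
        2 ^ (m - i - 1) * (2 ^ (i - 1) * 2 * (k' - 1)) := by omega
    have h3 := Nat.eq_of_mul_eq_mul_left (Nat.pow_pos two_pos) h2
    have h4 : 2 ^ (i - 1) * 2 * (k' - 1) = 2 * (2 ^ (i - 1) * (k' - 1)) := by ring
    omega
  · rw [phi_pos m i k (by omega) hi, phi_pos m i' k' (by omega) hi'] at h
    have h2 : 2 ^ (m - i - 1) * (2 * (k - 1) + 1) = 2 ^ (m - i' - 1) * (2 * (k' - 1) + 1) := by
      omega
    have := two_pow_mul_odd_inj _ _ _ _ h2
    omega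

lemma one_le_phi (m i k : ℕ) : 1 ≤ phi m i k := by
  unfold phi; split <;> exact Nat.le_add_left 1 _

lemma phi_bound_zero (m k : ℕ) (hm : 3 ≤ m) (hk : 1 ≤ k) :
    phi m 0 k * 2 ≤ 2 ^ m * k := by
  obtain ⟨a, rfl⟩ : ∃ a, k = a + 1 := ⟨k - 1, by omega⟩
  rw [phi_zero, show (2:ℕ) ^ m = 2 ^ (m - 1) * 2 by rw [← pow_succ]; congr 1; omega]
  simp only [Nat.add_sub_cancel]
  have hP : 1 ≤ 2 ^ (m - 1) := Nat.one_le_two_pow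
  have h1 : (2 ^ (m - 1) * a + 1) * 2 = 2 ^ (m - 1) * a * 2 + 2 := by ring
  have h2 : 2 ^ (m - 1) * 2 * (a + 1) = 2 ^ (m - 1) * a * 2 + 2 ^ (m - 1) * 2 := by ring
  omega

lemma phi_bound_one (m k : ℕ) (hm : 3 ≤ m) (hk : 1 ≤ k) :
    phi m 1 k * 2 ≤ 2 ^ m * k := by
  obtain ⟨a, rfl⟩ : ∃ a, k = a + 1 := ⟨k - 1, by omega⟩
  rw [phi_pos m 1 (a + 1) one_ne_zero (by omega),
      show (2:ℕ) ^ m = 2 ^ (m - 1 - 1) * 4 by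
        rw [show (4:ℕ) = 2 ^ 2 by norm_num, ← pow_add]; congr 1; omega]
  simp only [Nat.add_sub_cancel]
  have hP : 1 ≤ 2 ^ (m - 1 - 1) := Nat.one_le_two_pow
  have h1 : (2 ^ (m - 1 - 1) * (2 * a + 1) + 1) * 2
      = 2 ^ (m - 1 - 1) * a * 4 + 2 ^ (m - 1 - 1) * 2 + 2 := by ring
  have h2 : 2 ^ (m - 1 - 1) * 4 * (a + 1)
      = 2 ^ (m - 1 - 1) * a * 4 + 2 ^ (m - 1 - 1) * 2 + 2 ^ (m - 1 - 1) * 2 := by ring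
  omega

lemma phi_bound_ge2 (m i k : ℕ) (h2i : 2 ≤ i) (hi : i < m) (hk : 1 ≤ k) :
    phi m i k * 2 ^ i ≤ 2 ^ m * k := by
  obtain ⟨a, rfl⟩ : ∃ a, k = a + 1 := ⟨k - 1, by omega⟩
  rw [phi_pos m i (a + 1) (by omega) hi,
      show (2:ℕ) ^ m = 2 ^ (m - i - 1) * 2 * 2 ^ i by
        rw [mul_assoc, ← pow_succ', ← pow_add]; congr 1; omega]
  simp only [Nat.add_sub_cancel]
  have hA : 0 < 2 ^ (m - i - 1) := Nat.pow_pos two_pos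
  have h1 : (2 ^ (m - i - 1) * (2 * a + 1) + 1) * 2 ^ i
      = 2 ^ (m - i - 1) * 2 ^ i * a * 2 + 2 ^ (m - i - 1) * 2 ^ i + 2 ^ i := by ring
  have h2 : 2 ^ (m - i - 1) * 2 * 2 ^ i * (a + 1)
      = 2 ^ (m - i - 1) * 2 ^ i * a * 2 + 2 ^ (m - i - 1) * 2 ^ i
        + 2 ^ (m - i - 1) * 2 ^ i := by ring
  have h3 : 2 ^ i ≤ 2 ^ (m - i - 1) * 2 ^ i := Nat.le_mul_of_pos_left _ hA
  omega


/-- Machines of speeds 2, 2, 2^2, ..., 2^{m-1} cannot beat a single machine of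
speed `2^m` for total completion time. -/
theorem stmt5 (n m : ℕ) (hm : 3 ≤ m) (p : Fin n → ℝ) (hp : ∀ j, 0 ≤ p j)
    (speed : Fin m → ℝ)
    (hs01 : ∀ i : Fin m, (i : ℕ) < 2 → speed i = 2)
    (hs : ∀ i : Fin m, 2 ≤ (i : ℕ) → speed i = 2 ^ (i : ℕ)) :
    optTCTQ n m p speed ≥ optTCTQ n 1 p (fun _ => 2 ^ m) := by
  unfold optTCTQ
  have h2m : (0:ℝ) < 2 ^ m := by positivity
  apply le_csInf
  · refine ⟨_, fun j => (⟨0, by omega⟩, (j : ℕ) + 1), ?_, fun j => Nat.le_add_left 1 _, rfl⟩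
    intro j j' hjj
    have h2 := congrArg Prod.snd hjj
    simp only at h2
    exact Fin.ext (by omega)
  · rintro c ⟨S, hSinj, hS1, rfl⟩
    have hbdd : BddBelow {c : ℝ | ∃ U : Fin n → Fin 1 × ℕ, Function.Injective U ∧
        (∀ j, 1 ≤ (U j).2) ∧ c = ∑ j, ((U j).2 : ℝ) * p j / (fun _ => (2:ℝ) ^ m) (U j).1} := by
      refine ⟨0, ?_⟩
      rintro x ⟨U, _, _, rfl⟩
      apply Finset.sum_nonneg
      intro j _
      exact div_nonneg (mul_nonneg (Nat.cast_nonneg _) (hp j)) (le_of_lt h2m)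
    set T : Fin n → Fin 1 × ℕ := fun j => (0, phi m ((S j).1 : ℕ) (S j).2) with hT
    have hTmem : (∑ j, ((T j).2 : ℝ) * p j / (fun _ => (2:ℝ) ^ m) (T j).1) ∈
        {c : ℝ | ∃ U : Fin n → Fin 1 × ℕ, Function.Injective U ∧
        (∀ j, 1 ≤ (U j).2) ∧ c = ∑ j, ((U j).2 : ℝ) * p j / (fun _ => (2:ℝ) ^ m) (U j).1} := by
      refine ⟨T, ?_, fun j => one_le_phi _ _ _, rfl⟩
      intro j j' hjj
      have h2 : phi m ((S j).1:ℕ) (S j).2 = phi m ((S j').1:ℕ) (S j').2 :=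
        congrArg Prod.snd hjj
      have h3 := phi_inj m hm (S j).1.isLt (S j').1.isLt (hS1 j) (hS1 j') h2
      exact hSinj (Prod.ext (Fin.ext h3.1) h3.2)
    refine le_trans (csInf_le hbdd hTmem) ?_
    apply Finset.sum_le_sum
    intro j _
    have hkey : (phi m ((S j).1:ℕ) (S j).2 : ℝ) / 2 ^ m ≤ ((S j).2 : ℝ) / speed (S j).1 := by
      rcases lt_or_ge ((S j).1 : ℕ) 2 with hlt | hge
      · rw [hs01 _ hlt, div_le_div_iff₀ h2m two_pos]
        have hb : phi m ((S j).1:ℕ) (S j).2 * 2 ≤ 2 ^ m * (S j).2 := by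
          rcases (by omega : ((S j).1:ℕ) = 0 ∨ ((S j).1:ℕ) = 1) with h | h <;> rw [h]
          · exact phi_bound_zero m _ hm (hS1 j)
          · exact phi_bound_one m _ hm (hS1 j)
        have hb' : ((phi m ((S j).1:ℕ) (S j).2 * 2 : ℕ) : ℝ) ≤ ((2 ^ m * (S j).2 : ℕ) : ℝ) :=
          Nat.cast_le.mpr hb
        push_cast at hb'
        linarith
      · rw [hs _ hge, div_le_div_iff₀ h2m (by positivity)]
        have hb : phi m ((S j).1:ℕ) (S j).2 * 2 ^ ((S j).1:ℕ) ≤ 2 ^ m * (S j).2 :=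
          phi_bound_ge2 m _ _ hge (S j).1.isLt (hS1 j)
        have hb' : ((phi m ((S j).1:ℕ) (S j).2 * 2 ^ ((S j).1:ℕ) : ℕ) : ℝ) ≤
            ((2 ^ m * (S j).2 : ℕ) : ℝ) := Nat.cast_le.mpr hb
        push_cast at hb'
        linarith
    have h4 := mul_le_mul_of_nonneg_right hkey (hp j)
    rw [div_mul_eq_mul_div, div_mul_eq_mul_div] at h4
    exact h4
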